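/- For q ≥ 1, the generating function for the number of q-decreasing words by length is F_q(x) = (1 − x^{q+1}) / (1 − 2x + x^{q+2}); equivalently, writing f_n for the number of q-decreasing words of length n, the sequence satisfies f_n = 2 f_{n−1} − f_{n−q−2} for n ≥ q+2, with appropriate initial conditions f_n = 2^n for 0 ≤ n ≤ q, f_{q+1} = 2^{q+1} − 1. -/

import Mathlib

/-- A binary word (`List Bool`, `true` = bit 1) is `q`-decreasing if it is a
concatenation `1^{b0} ++ 0^{a1}1^{b1} ++ ... ++ 0^{am}1^{bm}` where every
block `0^a 1^b` with `a > 0` satisfies `q*a > b` (equivalently, every maximal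
factor of the form `0^a 1^b` with `a > 0` satisfies `q*a > b`). -/
inductive QDecreasing (q : ℕ) : List Bool → Prop where
  | ones (m : ℕ) : QDecreasing q (List.replicate m true)
  | snoc (w : List Bool) (a b : ℕ) (ha : 0 < a) (hb : b < q * a)
      (hw : QDecreasing q w) :
      QDecreasing q (w ++ List.replicate a false ++ List.replicate b true)

open List

lemma uniq_ones : ∀ (b b' : ℕ) (s s' : List Bool), s.head? ≠ some true → s'.head? ≠ some true →
    List.replicate b true ++ s = List.replicate b' true ++ s' → b = b' ∧ s = s' := by
  intro b
  induction b with
  | zero =>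
    intro b' s s' hs hs' h
    cases b' with
    | zero => simpa using h
    | succ b' => simp only [List.replicate_succ, List.nil_append] at h
                 subst h; simp at hs
  | succ b ih =>
    intro b' s s' hs hs' h
    cases b' with
    | zero => simp only [List.replicate_succ, List.nil_append] at h
              simp only [List.replicate_zero, List.nil_append] at h; rw [← h] at hs'; simp at hs'
    | succ b' =>
      simp only [List.replicate_succ, List.cons_append, List.cons.injEq] at h
      obtain ⟨beq, seq⟩ := ih b' s s' hs hs' h.2
      exact ⟨by omega, seq⟩

lemma uniq_zeros : ∀ (b b' : ℕ) (s s' : List Bool), s.head? ≠ some false → s'.head? ≠ some false →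
    List.replicate b false ++ s = List.replicate b' false ++ s' → b = b' ∧ s = s' := by
  intro b
  induction b with
  | zero =>
    intro b' s s' hs hs' h
    cases b' with
    | zero => simpa using h
    | succ b' => simp only [List.replicate_succ, List.nil_append] at h
                 subst h; simp at hs
  | succ b ih =>
    intro b' s s' hs hs' h
    cases b' with
    | zero => simp only [List.replicate_succ, List.nil_append] at h
              simp only [List.replicate_zero, List.nil_append] at h; rw [← h] at hs'; simp at hs'
    | succ b' =>
      simp only [List.replicate_succ, List.cons_append, List.cons.injEq] at h
      obtain ⟨beq, seq⟩ := ih b' s s' hs hs' h.2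
      exact ⟨by omega, seq⟩

def EndsOne (u : List Bool) : Prop := u.getLast? ≠ some false

def Blk (u : List Bool) (a b : ℕ) : List Bool :=
  u ++ List.replicate a false ++ List.replicate b true

lemma blk_reverse (u : List Bool) (a b : ℕ) :
    (Blk u a b).reverse = List.replicate b true ++ (List.replicate a false ++ u.reverse) := by
  simp [Blk, List.reverse_append]

lemma endsOne_replicate_true (m : ℕ) : EndsOne (List.replicate m true) := by
  cases m with
  | zero => simp [EndsOne]
  | succ m => rw [EndsOne, List.replicate_succ' (n := m) (a := true), List.getLast?_concat]; simp

lemma blk_getLast?_pos (u : List Bool) (a b : ℕ) (hb : 1 ≤ b) :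
    (Blk u a b).getLast? = some true := by
  obtain ⟨b', rfl⟩ : ∃ b', b = b' + 1 := ⟨b - 1, by omega⟩
  rw [Blk, List.replicate_succ' (n := b') (a := true), ← List.append_assoc, List.getLast?_concat]

lemma blk_getLast?_zero (u : List Bool) (a : ℕ) (ha : 1 ≤ a) :
    (Blk u a 0).getLast? = some false := by
  obtain ⟨a', rfl⟩ : ∃ a', a = a' + 1 := ⟨a - 1, by omega⟩
  rw [Blk, List.replicate_succ' (n := a') (a := false), List.replicate_zero, List.append_nil,
    ← List.append_assoc, List.getLast?_concat]

lemma blk_uniq {u u' : List Bool} {a b a' b' : ℕ} (hu : EndsOne u) (hu' : EndsOne u')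
    (ha : 1 ≤ a) (ha' : 1 ≤ a') (h : Blk u a b = Blk u' a' b') :
    u = u' ∧ a = a' ∧ b = b' := by
  have hr := congrArg List.reverse h
  rw [blk_reverse, blk_reverse] at hr
  have h1 : (List.replicate a false ++ u.reverse).head? ≠ some true := by
    obtain ⟨c, rfl⟩ : ∃ c, a = c + 1 := ⟨a - 1, by omega⟩
    simp [List.replicate_succ]
  have h1' : (List.replicate a' false ++ u'.reverse).head? ≠ some true := by
    obtain ⟨c, rfl⟩ : ∃ c, a' = c + 1 := ⟨a' - 1, by omega⟩
    simp [List.replicate_succ]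
  obtain ⟨hb, hrest⟩ := uniq_ones b b' _ _ h1 h1' hr
  have h2 : u.reverse.head? ≠ some false := by rwa [List.head?_reverse]
  have h2' : u'.reverse.head? ≠ some false := by rwa [List.head?_reverse]
  obtain ⟨haa, hrest2⟩ := uniq_zeros a a' _ _ h2 h2' hrest
  exact ⟨by simpa using congrArg List.reverse hrest2, haa, hb⟩

lemma blk_exists (w : List Bool) :
    (∃ m, w = List.replicate m true) ∨ ∃ u a b, EndsOne u ∧ 1 ≤ a ∧ w = Blk u a b := by
  induction w using List.reverseRecOn with
  | nil => exact Or.inl ⟨0, rfl⟩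
  | append_singleton v c ih =>
    cases c with
    | true =>
      rcases ih with ⟨m, rfl⟩ | ⟨u, a, b, hu, ha, rfl⟩
      · exact Or.inl ⟨m + 1, by rw [List.replicate_succ' (n := m) (a := true)]⟩
      · refine Or.inr ⟨u, a, b + 1, hu, ha, ?_⟩
        simp [Blk, List.replicate_succ' (n := b) (a := true)]
    | false =>
      rcases ih with ⟨m, rfl⟩ | ⟨u, a, b, hu, ha, rfl⟩
      · refine Or.inr ⟨List.replicate m true, 1, 0, endsOne_replicate_true m, le_refl 1, ?_⟩
        simp [Blk]
      · cases b with
        | zero =>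
          refine Or.inr ⟨u, a + 1, 0, hu, by omega, ?_⟩
          simp [Blk, List.replicate_succ' (n := a) (a := false)]
        | succ b =>
          refine Or.inr ⟨Blk u a (b+1), 1, 0, ?_, le_refl 1, ?_⟩
          · rw [EndsOne, blk_getLast?_pos u a (b+1) (by omega)]; simp
          · simp [Blk]
lemma blk_succ_b (u : List Bool) (a b : ℕ) : Blk u a (b+1) = Blk u a b ++ [true] := by
  simp [Blk, List.replicate_succ' (n := b) (a := true)]

lemma blk_succ_a (u : List Bool) (a : ℕ) : Blk u (a+1) 0 = Blk u a 0 ++ [false] := by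
  simp [Blk, List.replicate_succ' (n := a) (a := false)]

lemma qdec_inv (q : ℕ) {w : List Bool} (h : QDecreasing q w) :
    ∀ u a b, EndsOne u → 1 ≤ a → w = Blk u a b → QDecreasing q u ∧ b < q * a := by
  induction h with
  | ones m =>
    intro u a b hu ha hw
    exfalso
    have : (List.replicate m true).count false = (Blk u a b).count false := by rw [hw]
    simp [Blk, List.count_append, List.count_replicate] at this
    omega
  | snoc w a' b' ha' hb' hw ih =>
    intro u a b hu ha hweq
    rcases blk_exists w with ⟨m, rfl⟩ | ⟨u₀, a₀, b₀, hu₀, ha₀, rfl⟩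
    · have heq : Blk (List.replicate m true) a' b' = Blk u a b := hweq
      obtain ⟨h1, h2, h3⟩ := blk_uniq (endsOne_replicate_true m) hu ha' ha heq
      subst h1; subst h2; subst h3
      exact ⟨QDecreasing.ones m, hb'⟩
    · obtain ⟨hqu0, hb0⟩ := ih u₀ a₀ b₀ hu₀ ha₀ rfl
      by_cases hb0z : b₀ = 0
      · subst hb0z
        have heq : Blk u₀ (a₀ + a') b' = Blk u a b := by
          rw [← hweq]
          simp only [Blk, List.replicate_add, List.replicate_zero, List.append_nil,
            List.append_assoc]
        obtain ⟨h1, h2, h3⟩ := blk_uniq hu₀ hu (by omega) ha heq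
        subst h1; subst h2; subst h3
        refine ⟨hqu0, ?_⟩
        have : q * a' ≤ q * (a₀ + a') := Nat.mul_le_mul_left q (by omega)
        omega
      · have hE : EndsOne (Blk u₀ a₀ b₀) := by
          rw [EndsOne, blk_getLast?_pos _ _ _ (by omega)]; simp
        have heq : Blk (Blk u₀ a₀ b₀) a' b' = Blk u a b := hweq
        obtain ⟨h1, h2, h3⟩ := blk_uniq hE hu ha' ha heq
        subst h2; subst h3; rw [← h1]
        exact ⟨QDecreasing.snoc u₀ a₀ b₀ ha₀ hb0 hqu0, hb'⟩

lemma qdec_blk (q : ℕ) {u : List Bool} {a b : ℕ} (h : QDecreasing q u) (ha : 1 ≤ a)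
    (hb : b < q * a) : QDecreasing q (Blk u a b) :=
  QDecreasing.snoc u a b ha hb h

lemma qdec_blk_iff (q : ℕ) {u : List Bool} {a b : ℕ} (hu : EndsOne u) (ha : 1 ≤ a) :
    QDecreasing q (Blk u a b) ↔ QDecreasing q u ∧ b < q * a :=
  ⟨fun h => qdec_inv q h u a b hu ha rfl, fun ⟨h1, h2⟩ => qdec_blk q h1 ha h2⟩

lemma qdec_append_false (q : ℕ) (hq : 1 ≤ q) {w : List Bool} (h : QDecreasing q w) :
    QDecreasing q (w ++ [false]) := by
  have := QDecreasing.snoc w 1 0 one_pos (by omega) h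
  simpa using this

lemma qdec_dropLast (q : ℕ) (hq : 1 ≤ q) {w : List Bool} (h : QDecreasing q w) :
    QDecreasing q w.dropLast := by
  rcases blk_exists w with ⟨m, rfl⟩ | ⟨u, a, b, hu, ha, rfl⟩
  · cases m with
    | zero => simpa using h
    | succ m =>
      rw [List.replicate_succ' (n := m) (a := true), List.dropLast_concat]
      exact QDecreasing.ones m
  · obtain ⟨hqu, hb⟩ := qdec_inv q h u a b hu ha rfl
    cases b with
    | succ b =>
      rw [blk_succ_b, List.dropLast_concat]
      exact qdec_blk q hqu ha (by omega)
    | zero =>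
      obtain ⟨a', rfl⟩ : ∃ a', a = a' + 1 := ⟨a - 1, by omega⟩
      rw [blk_succ_a, List.dropLast_concat]
      cases a' with
      | zero => simpa [Blk] using hqu
      | succ a'' => exact qdec_blk q hqu (by omega) (Nat.mul_pos (by omega) (by omega))

def IsSat (q : ℕ) (w : List Bool) : Prop :=
  QDecreasing q w ∧ ¬ QDecreasing q (w ++ [true])

lemma isSat_iff (q : ℕ) (hq : 1 ≤ q) {w : List Bool} :
    IsSat q w ↔ ∃ u a, EndsOne u ∧ 1 ≤ a ∧ QDecreasing q u ∧ w = Blk u a (q*a - 1) := by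
  constructor
  · rintro ⟨h1, h2⟩
    rcases blk_exists w with ⟨m, rfl⟩ | ⟨u, a, b, hu, ha, rfl⟩
    · exfalso
      apply h2
      have : (List.replicate m true) ++ [true] = List.replicate (m+1) true := by
        rw [List.replicate_succ' (n := m) (a := true)]
      rw [this]; exact QDecreasing.ones (m+1)
    · obtain ⟨hqu, hb⟩ := qdec_inv q h1 u a b hu ha rfl
      refine ⟨u, a, hu, ha, hqu, ?_⟩
      have hb1 : b + 1 = q * a := by
        by_contra hc
        exact h2 (by rw [← blk_succ_b]; exact qdec_blk q hqu ha (by omega))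
      congr 1
      omega
  · rintro ⟨u, a, hu, ha, hqu, rfl⟩
    have hqa : 1 ≤ q * a := Nat.mul_pos (by omega) (by omega)
    refine ⟨qdec_blk q hqu ha (by omega), ?_⟩
    intro hcon
    rw [← blk_succ_b] at hcon
    obtain ⟨-, hlt⟩ := qdec_inv q hcon u a (q*a - 1 + 1) hu ha rfl
    omega
lemma blk_length (u : List Bool) (a b : ℕ) : (Blk u a b).length = u.length + a + b := by
  simp [Blk]; omega

instance finSub (n : ℕ) (P : List Bool → Prop) :
    Finite {w : List Bool // w.length = n ∧ P w} := by
  have h : Finite {l : List Bool // l.length = n} :=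
    (List.finite_length_eq Bool n).to_subtype
  exact Finite.of_injective
    (fun w => (⟨w.1, w.2.1⟩ : {l : List Bool // l.length = n}))
    (by intro a b h
        apply Subtype.ext
        have := congrArg Subtype.val h
        simpa using this)

lemma not_endsOne_iff {v : List Bool} : ¬ EndsOne v ↔ v.getLast? = some false := by
  simp [EndsOne]

lemma append_getLast_of_false {v : List Bool} (h : v.getLast? = some false) :
    v.dropLast ++ [false] = v := by
  have hne : v ≠ [] := by rintro rfl; simp at h
  have h2 := List.dropLast_append_getLast hne
  rw [List.getLast?_eq_getLast hne, Option.some_inj] at h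
  rw [h] at h2
  exact h2
  
lemma qdec_not_append_true (q : ℕ) (hq : 1 ≤ q) {w : List Bool} {c : Bool}
    (hw : QDecreasing q w) (h : ¬ QDecreasing q (w ++ [c])) : c = true := by
  cases c
  · exact absurd (qdec_append_false q hq hw) h
  · rfl

open Classical in
noncomputable def e1 (q n : ℕ) (hq : 1 ≤ q) :
    ({w : List Bool // w.length = n ∧ QDecreasing q w} × Bool) ≃
    ({w : List Bool // w.length = n + 1 ∧ QDecreasing q w} ⊕
      {w : List Bool // w.length = n ∧ IsSat q w}) where
  toFun p :=
    if h : QDecreasing q (p.1.1 ++ [p.2]) then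
      Sum.inl ⟨p.1.1 ++ [p.2], by simp [p.1.2.1], h⟩
    else
      Sum.inr ⟨p.1.1, p.1.2.1, p.1.2.2,
        (qdec_not_append_true q hq p.1.2.2 h) ▸ h⟩
  invFun := Sum.elim
    (fun v => (⟨v.1.dropLast, by simp [v.2.1], qdec_dropLast q hq v.2.2⟩,
      v.1.getLast (by intro h0; have := v.2.1; rw [h0] at this; simp at this)))
    (fun w => (⟨w.1, w.2.1, w.2.2.1⟩, true))
  left_inv p := by
    by_cases h : QDecreasing q (p.1.1 ++ [p.2])
    · simp only [h, dif_pos, Sum.elim_inl]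
      ext
      · simp [List.dropLast_concat]
      · simp [List.getLast_concat]
    · simp only [h, dif_neg, not_false_iff, Sum.elim_inr]
      have := qdec_not_append_true q hq p.1.2.2 h
      ext
      · simp
      · simp [this]
  right_inv v := by
    cases v with
    | inl v =>
      have hne : v.1 ≠ [] := by intro h0; have := v.2.1; rw [h0] at this; simp at this
      have hv : v.1.dropLast ++ [v.1.getLast hne] = v.1 := List.dropLast_append_getLast hne
      simp only [Sum.elim_inl]
      refine (dif_pos (show QDecreasing q (v.1.dropLast ++ [v.1.getLast hne]) by rw [hv]; exact v.2.2)).trans ?_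
      simp [hv]
    | inr w =>
      simp only [Sum.elim_inr]
      exact dif_neg w.2.2.2

open Classical in
noncomputable def e2 (q n : ℕ) (hq : 1 ≤ q) :
    {w : List Bool // w.length = n + 1 ∧ QDecreasing q w} ≃
    ({w : List Bool // w.length = n + 1 ∧ QDecreasing q w ∧ EndsOne w} ⊕
      {w : List Bool // w.length = n ∧ QDecreasing q w}) where
  toFun v :=
    if h : EndsOne v.1 then Sum.inl ⟨v.1, v.2.1, v.2.2, h⟩
    else Sum.inr ⟨v.1.dropLast, by simp [v.2.1], qdec_dropLast q hq v.2.2⟩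
  invFun := Sum.elim (fun u => ⟨u.1, u.2.1, u.2.2.1⟩)
    (fun w => ⟨w.1 ++ [false], by simp [w.2.1], qdec_append_false q hq w.2.2⟩)
  left_inv v := by
    by_cases h : EndsOne v.1
    · simp [h]
    · simp only [h, dif_neg, not_false_iff, Sum.elim_inr]
      exact Subtype.ext (append_getLast_of_false (not_endsOne_iff.mp h))
  right_inv v := by
    cases v with
    | inl u => simp [u.2.2.2]
    | inr w =>
      have h : ¬ EndsOne (w.1 ++ [false]) := by
        rw [not_endsOne_iff, List.getLast?_concat]
      simp only [dif_neg h, Sum.elim_inr]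
      refine (dif_neg h).trans ?_
      apply congrArg Sum.inr
      exact Subtype.ext (by simp [List.dropLast_concat])
open Classical in
noncomputable def satU (q : ℕ) (w : List Bool) : List Bool :=
  if h : ∃ u a, EndsOne u ∧ 1 ≤ a ∧ QDecreasing q u ∧ w = Blk u a (q*a - 1) then
    h.choose else []

open Classical in
noncomputable def satA (q : ℕ) (w : List Bool) : ℕ :=
  if h : ∃ u a, EndsOne u ∧ 1 ≤ a ∧ QDecreasing q u ∧ w = Blk u a (q*a - 1) then
    h.choose_spec.choose else 0

lemma sat_spec {q : ℕ} (hq : 1 ≤ q) {w : List Bool} (hw : IsSat q w) :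
    EndsOne (satU q w) ∧ 1 ≤ satA q w ∧ QDecreasing q (satU q w) ∧
      w = Blk (satU q w) (satA q w) (q * satA q w - 1) := by
  have h := (isSat_iff q hq).mp hw
  rw [satU, satA]
  rw [dif_pos h, dif_pos h]
  exact h.choose_spec.choose_spec

lemma sat_eq {q : ℕ} (hq : 1 ≤ q) {u : List Bool} {a : ℕ} (hu : EndsOne u) (ha : 1 ≤ a)
    (hqu : QDecreasing q u) :
    satU q (Blk u a (q*a - 1)) = u ∧ satA q (Blk u a (q*a - 1)) = a := by
  have hsat : IsSat q (Blk u a (q*a - 1)) :=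
    (isSat_iff q hq).mpr ⟨u, a, hu, ha, hqu, rfl⟩
  obtain ⟨h1, h2, h3, h4⟩ := sat_spec hq hsat
  obtain ⟨e1, e2, -⟩ := blk_uniq h1 hu h2 ha h4.symm
  exact ⟨e1, e2⟩

lemma sat_isSat {q : ℕ} (hq : 1 ≤ q) {u : List Bool} {a : ℕ} (hu : EndsOne u) (ha : 1 ≤ a)
    (hqu : QDecreasing q u) : IsSat q (Blk u a (q*a - 1)) :=
  (isSat_iff q hq).mpr ⟨u, a, hu, ha, hqu, rfl⟩

open Classical in
noncomputable def e3 (q m : ℕ) (hq : 1 ≤ q) :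
    {w : List Bool // w.length = m + q + 1 ∧ IsSat q w} ≃
    ({w : List Bool // w.length = m + 1 ∧ QDecreasing q w ∧ EndsOne w} ⊕
      {w : List Bool // w.length = m ∧ IsSat q w}) where
  toFun v :=
    if h : satA q v.1 = 1 then
      Sum.inl ⟨satU q v.1, by
        obtain ⟨h1, h2, h3, h4⟩ := sat_spec hq v.2.2
        have hl := v.2.1
        rw [h4, blk_length, h] at hl
        constructor
        · omega
        · exact ⟨h3, h1⟩⟩
    else
      Sum.inr ⟨Blk (satU q v.1) (satA q v.1 - 1) (q * (satA q v.1 - 1) - 1), by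
        obtain ⟨h1, h2, h3, h4⟩ := sat_spec hq v.2.2
        have hl := v.2.1
        rw [h4, blk_length] at hl
        have ha2 : 2 ≤ satA q v.1 := by omega
        constructor
        · rw [blk_length]
          have hk : q * (satA q v.1 - 1) + q = q * satA q v.1 := by
            rw [← Nat.mul_succ]; congr 1; omega
          have hge : q ≤ q * (satA q v.1 - 1) := Nat.le_mul_of_pos_right q (by omega)
          omega
        · exact sat_isSat hq h1 (by omega) h3⟩
  invFun := Sum.elim
    (fun u => ⟨Blk u.1 1 (q - 1), by
      constructor
      · rw [blk_length]; have := u.2.1; omega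
      · have : q - 1 = q * 1 - 1 := by omega
        rw [this]
        exact sat_isSat hq u.2.2.2 le_rfl u.2.2.1⟩)
    (fun w => ⟨Blk (satU q w.1) (satA q w.1 + 1) (q * (satA q w.1 + 1) - 1), by
      obtain ⟨h1, h2, h3, h4⟩ := sat_spec hq w.2.2
      have hl := w.2.1
      rw [h4, blk_length] at hl
      constructor
      · rw [blk_length]
        have : q * (satA q w.1 + 1) = q * satA q w.1 + q := by ring
        have hge : 1 ≤ q * satA q w.1 := Nat.one_le_iff_ne_zero.mpr (by positivity)
        omega
      · exact sat_isSat hq h1 (by omega) h3⟩)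
  left_inv v := by
    obtain ⟨h1, h2, h3, h4⟩ := sat_spec hq v.2.2
    by_cases h : satA q v.1 = 1
    · simp only [dif_pos h, Sum.elim_inl]
      apply Subtype.ext
      show Blk (satU q v.1) 1 (q - 1) = v.1
      conv_rhs => rw [h4]
      rw [h]
      congr 1
      omega
    · simp only [dif_neg h, Sum.elim_inr]
      apply Subtype.ext
      show Blk (satU q (Blk (satU q v.1) (satA q v.1 - 1) (q * (satA q v.1 - 1) - 1)))
        (satA q (Blk (satU q v.1) (satA q v.1 - 1) (q * (satA q v.1 - 1) - 1)) + 1)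
        _ = v.1
      obtain ⟨e1, e2⟩ := sat_eq hq h1 (a := satA q v.1 - 1) (by omega) h3
      rw [e1, e2]
      conv_rhs => rw [h4]
      rw [Nat.sub_add_cancel h2]
  right_inv v := by
    cases v with
    | inl u =>
      have hq1 : q - 1 = q * 1 - 1 := by omega
      have he : satU q (Blk u.1 1 (q - 1)) = u.1 ∧ satA q (Blk u.1 1 (q - 1)) = 1 := by
        rw [hq1]
        exact sat_eq hq u.2.2.2 le_rfl u.2.2.1
      simp only [Sum.elim_inl]
      refine (dif_pos he.2).trans ?_
      exact congrArg Sum.inl (Subtype.ext he.1)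
    | inr w =>
      obtain ⟨h1, h2, h3, h4⟩ := sat_spec hq w.2.2
      obtain ⟨e1, e2⟩ := sat_eq hq h1 (a := satA q w.1 + 1) (by omega) h3
      simp only [Sum.elim_inr]
      have hn2 : ¬ satA q (Blk (satU q w.1) (satA q w.1 + 1) (q * (satA q w.1 + 1) - 1)) = 1 := by
        rw [e2]; omega
      refine (dif_neg hn2).trans ?_
      apply congrArg Sum.inr
      apply Subtype.ext
      show Blk _ _ _ = w.1
      rw [e1, e2]
      conv_rhs => rw [h4]
      congr 1
noncomputable def Fc (q n : ℕ) : ℕ := Nat.card {w : List Bool // w.length = n ∧ QDecreasing q w}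
noncomputable def Gc (q n : ℕ) : ℕ := Nat.card {w : List Bool // w.length = n ∧ IsSat q w}
noncomputable def Hc (q n : ℕ) : ℕ :=
  Nat.card {w : List Bool // w.length = n ∧ QDecreasing q w ∧ EndsOne w}

lemma card_e1 (q n : ℕ) (hq : 1 ≤ q) : Fc q (n+1) + Gc q n = 2 * Fc q n := by
  have h := Nat.card_congr (e1 q n hq)
  rw [Nat.card_prod, Nat.card_sum] at h
  have hb : Nat.card Bool = 2 := by simp [Nat.card_eq_fintype_card]
  rw [hb] at h
  unfold Fc Gc
  omega

lemma card_e2 (q n : ℕ) (hq : 1 ≤ q) : Fc q (n+1) = Hc q (n+1) + Fc q n := by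
  have h := Nat.card_congr (e2 q n hq)
  rw [Nat.card_sum] at h
  exact h

lemma card_e3 (q m : ℕ) (hq : 1 ≤ q) : Gc q (m+q+1) = Hc q (m+1) + Gc q m := by
  have h := Nat.card_congr (e3 q m hq)
  rw [Nat.card_sum] at h
  exact h

lemma Fc_zero (q : ℕ) : Fc q 0 = 1 := by
  have : Unique {w : List Bool // w.length = 0 ∧ QDecreasing q w} :=
    { default := ⟨[], rfl, by simpa using QDecreasing.ones 0⟩
      uniq := fun w => Subtype.ext (List.length_eq_zero_iff.mp w.2.1) }
  exact Nat.card_unique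

lemma Gc_lt (q m : ℕ) (hq : 1 ≤ q) (h : m < q) : Gc q m = 0 := by
  have : IsEmpty {w : List Bool // w.length = m ∧ IsSat q w} := by
    constructor
    rintro ⟨w, hl, hs⟩
    obtain ⟨u, a, hu, ha, hqu, rfl⟩ := (isSat_iff q hq).mp hs
    rw [blk_length] at hl
    have hge : q ≤ q * a := Nat.le_mul_of_pos_right q (by omega)
    omega
  exact Nat.card_of_isEmpty

lemma Gc_q (q : ℕ) (hq : 1 ≤ q) : Gc q q = 1 := by
  have : Unique {w : List Bool // w.length = q ∧ IsSat q w} :=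
    { default := ⟨Blk [] 1 (q*1 - 1), by
        refine ⟨?_, sat_isSat hq (by simp [EndsOne]) le_rfl
          (by simpa using QDecreasing.ones 0)⟩
        rw [blk_length]; simp; omega⟩
      uniq := fun w => by
        obtain ⟨hl, hs⟩ := w.2
        obtain ⟨u, a, hu, ha, hqu, hw⟩ := (isSat_iff q hq).mp hs
        rw [hw, blk_length] at hl
        rcases Nat.lt_or_ge a 2 with h1 | h1
        · have ha1 : a = 1 := by omega
          subst ha1
          have hu0 : u.length = 0 := by omega
          have : u = [] := List.length_eq_zero_iff.mp hu0
          subst this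
          exact Subtype.ext hw
        · exfalso
          have h2q : q * 2 ≤ q * a := Nat.mul_le_mul_left q h1
          omega }
  exact Nat.card_unique

lemma Gc_key (q : ℕ) (hq : 1 ≤ q) (m : ℕ) : Gc q (m+q+1) = Fc q m := by
  have h1 := card_e1 q m hq
  have h2 := card_e2 q m hq
  have h3 := card_e3 q m hq
  omega

lemma Fc_pow (q : ℕ) (hq : 1 ≤ q) : ∀ n, n ≤ q → Fc q n = 2^n := by
  intro n
  induction n with
  | zero => intro _; simpa using Fc_zero q
  | succ n ih =>
    intro h
    have h1 := card_e1 q n hq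
    rw [Gc_lt q n hq (by omega), ih (by omega)] at h1
    rw [pow_succ]
    omega

lemma Fc_q1 (q : ℕ) (hq : 1 ≤ q) : Fc q (q+1) = 2^(q+1) - 1 := by
  have h1 := card_e1 q q hq
  rw [Gc_q q hq, Fc_pow q hq q le_rfl] at h1
  rw [pow_succ]
  omega

lemma Fc_rec (q : ℕ) (hq : 1 ≤ q) (n : ℕ) (h : q+2 ≤ n) :
    Fc q n + Fc q (n-(q+2)) = 2 * Fc q (n-1) := by
  obtain ⟨m, rfl⟩ : ∃ m, n = m + q + 2 := ⟨n - (q+2), by omega⟩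
  have h1 := card_e1 q (m+q+1) hq
  have h2 := Gc_key q hq m
  have e1 : m + q + 2 - (q+2) = m := by omega
  have e2 : m + q + 2 - 1 = m + q + 1 := by omega
  rw [e1, e2]
  have e3 : m + q + 1 + 1 = m + q + 2 := by omega
  rw [e3] at h1
  omega

lemma gf (q : ℕ) (hq : 1 ≤ q) :
    (PowerSeries.mk (fun n => (Fc q n : ℤ))) *
      (1 - 2 * PowerSeries.X + PowerSeries.X ^ (q + 2)) =
    1 - PowerSeries.X ^ (q + 1) := by
  have expand : (PowerSeries.mk (fun n => (Fc q n : ℤ))) *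
      (1 - 2 * PowerSeries.X + PowerSeries.X ^ (q + 2)) =
      (PowerSeries.mk (fun n => (Fc q n : ℤ)))
      - ((PowerSeries.mk (fun n => (Fc q n : ℤ))) * PowerSeries.X ^ 1
        + (PowerSeries.mk (fun n => (Fc q n : ℤ))) * PowerSeries.X ^ 1)
      + (PowerSeries.mk (fun n => (Fc q n : ℤ))) * PowerSeries.X ^ (q+2) := by
    ring
  ext n
  rw [expand]
  simp only [map_sub, map_add, PowerSeries.coeff_mk, PowerSeries.coeff_mul_X_pow',
    PowerSeries.coeff_one, PowerSeries.coeff_X_pow]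
  by_cases h0 : n = 0
  · subst h0
    rw [if_neg (by omega), if_neg (by omega), if_pos rfl, if_neg (by omega)]
    simp [Fc_zero q]
  · by_cases hq1 : n ≤ q
    · rw [if_pos (by omega), if_neg (by omega), if_neg h0, if_neg (by omega)]
      obtain ⟨k, rfl⟩ : ∃ k, n = k + 1 := ⟨n - 1, by omega⟩
      rw [Fc_pow q hq (k+1) hq1, Fc_pow q hq (k+1-1) (by omega)]
      simp only [Nat.add_sub_cancel]
      push_cast
      rw [pow_succ]
      ring
    · by_cases hq2 : n = q+1
      · subst hq2
        rw [if_pos (by omega), if_neg (by omega), if_neg h0, if_pos rfl]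
        rw [Fc_q1 q hq, Fc_pow q hq (q+1-1) (by omega)]
        simp only [Nat.add_sub_cancel]
        have h2 : (1:ℕ) ≤ 2^(q+1) := Nat.one_le_two_pow
        push_cast [h2]
        rw [pow_succ]
        ring
      · rw [if_pos (by omega), if_pos (by omega), if_neg h0, if_neg hq2]
        have hrec := Fc_rec q hq n (by omega)
        have : ((Fc q n : ℤ)) + (Fc q (n-(q+2)) : ℤ) = 2 * (Fc q (n-1) : ℤ) := by
          exact_mod_cast hrec
        ring_nf
        ring_nf at this
        omega


theorem qdecreasing_counting_gf (q : ℕ) (hq : 1 ≤ q) :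
    (PowerSeries.mk (fun n =>
        (Nat.card {w : List Bool // w.length = n ∧ QDecreasing q w} : ℤ)) *
      (1 - 2 * PowerSeries.X + PowerSeries.X ^ (q + 2)) =
      1 - PowerSeries.X ^ (q + 1)) ∧
    (∀ n ≤ q, Nat.card {w : List Bool // w.length = n ∧ QDecreasing q w} = 2 ^ n) ∧
    (Nat.card {w : List Bool // w.length = q + 1 ∧ QDecreasing q w} = 2 ^ (q + 1) - 1) ∧
    (∀ n, q + 2 ≤ n →
      Nat.card {w : List Bool // w.length = n ∧ QDecreasing q w} +
        Nat.card {w : List Bool // w.length = n - (q + 2) ∧ QDecreasing q w} =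
      2 * Nat.card {w : List Bool // w.length = n - 1 ∧ QDecreasing q w}) := by
  exact ⟨gf q hq, fun n hn => Fc_pow q hq n hn, Fc_q1 q hq,
    fun n hn => Fc_rec q hq n hn⟩
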